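/- Let G be a finite abelian group of order n and k an integer with 4 ≤ k ≤ ⌊n/2⌋ + 1. For every b ∈ G, |N(k, b) − C(n, k)/n| ≤ k · C(⌊n/2⌋, ⌊k/2⌋), where N(k, b) is the number of k-subsets of G summing to b. -/

import Mathlib

open Finset Polynomial

/-- Binomial coefficients increase up to the middle. -/
lemma my_choose_mono_half (M : ℕ) : ∀ b, 2 * b ≤ M + 1 → ∀ a, a ≤ b → M.choose a ≤ M.choose b := by
  intro b
  induction b with
  | zero => intro _ a ha; interval_cases a; exact le_refl _
  | succ b ih =>
    intro hb a ha
    rcases Nat.lt_or_ge a (b+1) with h | h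
    · have h1 : M.choose a ≤ M.choose b := ih (by omega) a (by omega)
      have h2 : M.choose b ≤ M.choose (b+1) := by
        rcases Nat.lt_or_ge (2*(b+1)) (M+1) with hM | hM
        · exact Nat.choose_le_succ_of_lt_half_left (by omega)
        · have hM' : M = 2*b+1 := by omega
          rw [hM']
          exact (Nat.choose_symm_half b).ge
      exact le_trans h1 h2
    · have : a = b + 1 := by omega
      simp [this]

/-- An additive character maps a finset sum to a product. -/
lemma my_addchar_map_sum {G : Type*} [AddCommGroup G] (ψ : AddChar G ℂ) (S : Finset G) :
    ψ (S.sum id) = ∏ g ∈ S, ψ g := by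
  classical
  induction S using Finset.cons_induction with
  | empty => simp
  | cons a s ha ih =>
    rw [Finset.sum_cons, Finset.prod_cons, AddChar.map_add_eq_mul, ih]
    simp

/-- Key character sum bound. -/
lemma my_key (G : Type) [AddCommGroup G] [Fintype G] [DecidableEq G]
    (n k : ℕ) (hn : n = Fintype.card G) (hk4 : 4 ≤ k) (hk : k ≤ n / 2 + 1)
    (χ : AddChar G ℂ) (hχ : χ ≠ 0) :
    ‖(∑ S ∈ Finset.univ.powersetCard k, ∏ g ∈ S, χ g)‖
      ≤ (((n / 2).choose (k / 2) : ℕ) : ℝ) := by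
  classical
  set U : Finset ℂ := Finset.image χ Finset.univ with hU
  set d : ℕ := U.card with hd
  set m : ℕ := (Finset.univ.filter (fun g : G => χ g = (1:ℂ))).card with hm
  -- basic facts about values
  have hval_ne : ∀ g : G, χ g ≠ 0 := by
    intro g h
    have := AddChar.norm_apply χ g
    rw [h] at this; simp at this
  have hUmul : ∀ u ∈ U, ∀ z ∈ U, u * z ∈ U := by
    intro u hu z hz
    rw [hU, Finset.mem_image] at hu hz ⊢
    obtain ⟨a, _, ha⟩ := hu; obtain ⟨c, _, hc⟩ := hz
    exact ⟨a + c, Finset.mem_univ _, by rw [AddChar.map_add_eq_mul, ha, hc]⟩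
  have hUinv : ∀ u ∈ U, u⁻¹ ∈ U := by
    intro u hu
    rw [hU, Finset.mem_image] at hu ⊢
    obtain ⟨a, _, ha⟩ := hu
    exact ⟨-a, Finset.mem_univ _, by rw [AddChar.map_neg_eq_inv, ha]⟩
  -- fibers all have cardinality m
  have hfib : ∀ z ∈ U, (Finset.univ.filter (fun g : G => χ g = z)).card = m := by
    intro z hz
    rw [hU, Finset.mem_image] at hz
    obtain ⟨g₀, _, hg₀⟩ := hz
    rw [hm]
    apply Finset.card_bij (fun g _ => g - g₀)
    · intro a ha
      simp only [Finset.mem_filter, Finset.mem_univ, true_and] at ha ⊢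
      rw [AddChar.map_sub_eq_div, ha, hg₀]; exact div_self (hg₀ ▸ hval_ne g₀)
    · intro a ha b hb hab
      simpa using congrArg (· + g₀) hab
    · intro c hc
      simp only [Finset.mem_filter, Finset.mem_univ, true_and] at hc
      refine ⟨c + g₀, ?_, by abel⟩
      simp only [Finset.mem_filter, Finset.mem_univ, true_and]
      rw [AddChar.map_add_eq_mul, hc, hg₀, one_mul]
  -- n = d * m
  have hdm : n = d * m := by
    rw [hn, ← Finset.card_univ, Finset.card_eq_sum_card_fiberwise (f := fun g : G => χ g)
      (t := U) (fun g _ => Finset.mem_image_of_mem _ (Finset.mem_univ g)),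
      Finset.sum_congr rfl hfib, Finset.sum_const, smul_eq_mul]
  -- 2 ≤ d
  have hd2 : 2 ≤ d := by
    obtain ⟨g, hg⟩ := AddChar.ne_zero_iff.mp hχ
    have h1 : (1:ℂ) ∈ U := Finset.mem_image.mpr ⟨0, Finset.mem_univ _, χ.map_zero_eq_one⟩
    have h2 : χ g ∈ U := Finset.mem_image_of_mem _ (Finset.mem_univ g)
    have : 1 < U.card := Finset.one_lt_card.mpr ⟨1, h1, χ g, h2, fun h => hg h.symm⟩
    omega
  -- esymm vanishing
  have hvanish : ∀ j, 0 < j → j < d → ∑ t ∈ U.powersetCard j, ∏ z ∈ t, z = 0 := by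
    intro j hj0 hjd
    -- find u ∈ U with u ^ j ≠ 1
    have hex : ∃ u ∈ U, u ^ j ≠ 1 := by
      by_contra hcon
      push_neg at hcon
      have hsub : U ⊆ (Polynomial.nthRoots j (1:ℂ)).toFinset := by
        intro z hz
        rw [Multiset.mem_toFinset, Polynomial.mem_nthRoots hj0]
        exact hcon z hz
      have := Finset.card_le_card hsub
      have h2 := Multiset.toFinset_card_le (Polynomial.nthRoots j (1:ℂ))
      have h3 := Polynomial.card_nthRoots j (1:ℂ)
      omega
    obtain ⟨u, hu, huj⟩ := hex
    have hu0 : u ≠ 0 := by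
      rw [hU, Finset.mem_image] at hu
      obtain ⟨a, _, ha⟩ := hu; exact ha ▸ hval_ne a
    set E := ∑ t ∈ U.powersetCard j, ∏ z ∈ t, z with hE
    have key : E = u ^ j * E := by
      rw [hE, Finset.mul_sum]
      apply Finset.sum_nbij' (i := fun t => t.image (fun z => u⁻¹ * z))
        (j := fun t => t.image (fun z => u * z))
      · intro t ht
        rw [Finset.mem_powersetCard] at ht ⊢
        constructor
        · intro z hz
          rw [Finset.mem_image] at hz
          obtain ⟨w, hw, rfl⟩ := hz
          exact hUmul u⁻¹ (hUinv u hu) w (ht.1 hw)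
        · rw [Finset.card_image_of_injective _ (mul_right_injective₀ (inv_ne_zero hu0)), ht.2]
      · intro t ht
        rw [Finset.mem_powersetCard] at ht ⊢
        constructor
        · intro z hz
          rw [Finset.mem_image] at hz
          obtain ⟨w, hw, rfl⟩ := hz
          exact hUmul u hu w (ht.1 hw)
        · rw [Finset.card_image_of_injective _ (mul_right_injective₀ hu0), ht.2]
      · intro t ht
        rw [Finset.image_image]
        have : ((fun z => u * z) ∘ (fun z => u⁻¹ * z)) = id := by
          funext z; rw [Function.comp_apply, ← mul_assoc, mul_inv_cancel₀ hu0, one_mul, id]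
        rw [this, Finset.image_id]
      · intro t ht
        rw [Finset.image_image]
        have : ((fun z => u⁻¹ * z) ∘ (fun z => u * z)) = id := by
          funext z; rw [Function.comp_apply, ← mul_assoc, inv_mul_cancel₀ hu0, one_mul, id]
        rw [this, Finset.image_id]
      · intro t ht
        rw [Finset.mem_powersetCard] at ht
        rw [Finset.prod_image (fun a _ b _ h => mul_right_injective₀ (inv_ne_zero hu0) h),
          Finset.prod_mul_distrib, Finset.prod_const, ht.2, ← mul_assoc, ← mul_pow,
          mul_inv_cancel₀ hu0, one_pow, one_mul]
    have h0 : (u ^ j - 1) * E = 0 := by linear_combination -key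
    rcases mul_eq_zero.mp h0 with h | h
    · exact absurd (sub_eq_zero.mp h) huj
    · exact h
  -- numeric facts
  have hd0 : 0 < d := by omega
  have hm0 : 0 < m := by
    rcases Nat.eq_zero_or_pos m with h | h
    · rw [h, mul_zero] at hdm
      have hG : 0 < Fintype.card G := Fintype.card_pos
      omega
    · exact h
  have hkn : k ≤ n := by omega
  set c : ℂ := ∏ z ∈ U, z with hc
  -- Q = X^d + C c
  have hQ : ∏ z ∈ U, (X + C z) = X ^ d + C c := by
    have hdeg : (∏ z ∈ U, (X + C z)).natDegree = d := by
      rw [Polynomial.natDegree_prod _ _ (fun z _ => Polynomial.X_add_C_ne_zero z)]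
      simp [Polynomial.natDegree_X_add_C]
      exact hd.symm
    have hmonic : (∏ z ∈ U, (X + C z)).Monic :=
      Polynomial.monic_prod_of_monic _ _ (fun z _ => Polynomial.monic_X_add_C z)
    ext j
    have hrhs : (X ^ d + C c).coeff j
        = (if j = d then 1 else 0) + (if j = 0 then c else 0) := by
      rw [Polynomial.coeff_add, Polynomial.coeff_X_pow, Polynomial.coeff_C]
    rcases lt_trichotomy j d with hj | hj | hj
    · rcases Nat.eq_zero_or_pos j with hj0 | hj0
      · subst hj0
        have hco := Finset.prod_X_add_C_coeff U (id : ℂ → ℂ) (Nat.zero_le _)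
        simp only [id_eq] at hco
        rw [hco, hrhs, Nat.sub_zero, Finset.powersetCard_self, Finset.sum_singleton,
          if_neg (show ¬(0 = d) by omega), if_pos rfl, zero_add, hc]
      · have hco := Finset.prod_X_add_C_coeff U (id : ℂ → ℂ) (le_of_lt hj)
        simp only [id_eq] at hco
        rw [hco, hrhs]
        have hv := hvanish (d - j) (by omega) (by omega)
        simp only [← hd] at hv ⊢
        rw [hv, if_neg (by omega), if_neg (by omega), add_zero]
    · subst hj
      rw [hrhs, if_pos rfl, if_neg (by omega), add_zero, ← hdeg]
      exact hmonic.coeff_natDegree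
    · rw [hrhs, if_neg (by omega), if_neg (by omega), add_zero,
        Polynomial.coeff_eq_zero_of_natDegree_lt (by rw [hdeg]; exact hj)]
  -- P = Q^m
  have hP : ∏ g : G, (X + C (χ g)) = (X ^ d + C c) ^ m := by
    rw [← hQ, ← Finset.prod_pow]
    rw [← Finset.prod_fiberwise_of_maps_to (g := fun g : G => χ g) (t := U)
      (fun g _ => Finset.mem_image_of_mem _ (Finset.mem_univ g)) (fun g => X + C (χ g))]
    apply Finset.prod_congr rfl
    intro z hz
    rw [Finset.prod_congr rfl (fun g hg => by rw [(Finset.mem_filter.mp hg).2]),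
      Finset.prod_const, hfib z hz]
  -- T = coeff
  have hT : (∑ S ∈ Finset.univ.powersetCard k, ∏ g ∈ S, χ g)
      = ((X ^ d + C c) ^ m).coeff (n - k) := by
    rw [← hP, Finset.prod_X_add_C_coeff Finset.univ (fun g : G => χ g)
      (by rw [Finset.card_univ, ← hn]; omega)]
    congr 1
    rw [Finset.card_univ, ← hn]
    congr 1
    omega
  have habs1 : ‖c‖ = 1 := by
    rw [hc, norm_prod]
    apply Finset.prod_eq_one
    intro z hz
    rw [hU, Finset.mem_image] at hz
    obtain ⟨g, _, rfl⟩ := hz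
    rw [AddChar.norm_apply]
  -- coefficient of the power
  have hcoeff : ((X ^ d + C c) ^ m).coeff (n - k)
      = ∑ i ∈ Finset.range (m + 1),
          (if n - k = d * i then c ^ (m - i) * ((m.choose i : ℕ) : ℂ) else 0) := by
    rw [add_pow, Polynomial.finset_sum_coeff]
    apply Finset.sum_congr rfl
    intro i _
    rw [← pow_mul, ← Polynomial.C_pow, ← Polynomial.C_eq_natCast, mul_assoc, ← Polynomial.C_mul,
      Polynomial.coeff_mul_C, Polynomial.coeff_X_pow, ite_mul, one_mul, zero_mul]
  set i₀ : ℕ := (n - k) / d with hi₀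
  have hi₀mem : i₀ ∈ Finset.range (m + 1) := by
    rw [Finset.mem_range, hi₀]
    have h1 : (n - k) / d ≤ n / d := Nat.div_le_div_right (Nat.sub_le n k)
    have h2 : n / d = m := by rw [hdm, Nat.mul_div_cancel_left m hd0]
    omega
  have hsingle : (∑ i ∈ Finset.range (m + 1),
      (if n - k = d * i then c ^ (m - i) * ((m.choose i : ℕ) : ℂ) else 0))
      = (if n - k = d * i₀ then c ^ (m - i₀) * ((m.choose i₀ : ℕ) : ℂ) else 0) := by
    apply Finset.sum_eq_single i₀
    · intro i _ hne
      rw [if_neg]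
      intro h
      exact hne (by rw [hi₀, h, Nat.mul_div_cancel_left i hd0])
    · intro h
      exact absurd hi₀mem h
  rw [hT, hcoeff, hsingle]
  split_ifs with hcase
  · rw [norm_mul, norm_pow, habs1, one_pow, one_mul, Complex.norm_natCast]
    have hnat : m.choose i₀ ≤ (n / 2).choose (k / 2) := by
      have hi₀m : i₀ ≤ m := by
        rw [Finset.mem_range] at hi₀mem
        omega
      set q : ℕ := m - i₀ with hq
      have h1 : d * q + d * i₀ = d * m := by
        rw [← Nat.mul_add]
        congr 1
        omega
      have hkq : k = d * q := by
        have h2 : d * m - d * i₀ = d * q := Nat.sub_eq_of_eq_add (by omega)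
        calc k = n - (n - k) := by omega
        _ = d * m - d * i₀ := by rw [hcase, hdm]
        _ = d * q := h2
      have hqk2 : q ≤ k / 2 := by
        have h6 : k / d = q := by rw [hkq, Nat.mul_div_cancel_left q hd0]
        have h3 : k / d ≤ k / 2 := Nat.div_le_div_left hd2 (by norm_num)
        omega
      have hm2 : m ≤ n / 2 := by
        have h4 : n / d = m := by rw [hdm, Nat.mul_div_cancel_left m hd0]
        have h5 : n / d ≤ n / 2 := Nat.div_le_div_left hd2 (by norm_num)
        omega
      calc m.choose i₀ = m.choose q := by rw [hq, Nat.choose_symm hi₀m]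
      _ ≤ (n / 2).choose q := Nat.choose_le_choose q hm2
      _ ≤ (n / 2).choose (k / 2) := my_choose_mono_half (n / 2) (k / 2) (by omega) q hqk2
    exact_mod_cast hnat
  · rw [norm_zero]
    positivity

theorem stmt_12 (G : Type) [AddCommGroup G] [Fintype G] [DecidableEq G]
    (n k : ℕ) (hn : n = Fintype.card G) (hk4 : 4 ≤ k) (hk : k ≤ n / 2 + 1) (b : G) :
    |((((Finset.univ.powersetCard k).filter
          (fun S : Finset G => S.sum id = b)).card : ℝ)) -
        (n.choose k : ℝ) / (n : ℝ)| ≤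
      (k : ℝ) * ((n / 2).choose (k / 2) : ℝ) := by
  classical
  have hn0 : 0 < n := hn ▸ Fintype.card_pos
  set N : ℕ := ((Finset.univ.powersetCard k).filter (fun S : Finset G => S.sum id = b)).card
    with hN
  set B : ℝ := (((n / 2).choose (k / 2) : ℕ) : ℝ) with hB
  set T : AddChar G ℂ → ℂ := fun ψ => ∑ S ∈ Finset.univ.powersetCard k, ∏ g ∈ S, ψ g with hTdef
  have hmain : ∑ ψ : AddChar G ℂ, ψ (-b) * T ψ = (n : ℂ) * N := by
    have h1 : ∀ ψ : AddChar G ℂ, ψ (-b) * T ψ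
        = ∑ S ∈ Finset.univ.powersetCard k, ψ (S.sum id - b) := by
      intro ψ
      rw [hTdef]
      simp only
      rw [Finset.mul_sum]
      apply Finset.sum_congr rfl
      intro S _
      rw [sub_eq_add_neg, AddChar.map_add_eq_mul, mul_comm, my_addchar_map_sum]
    rw [Finset.sum_congr rfl (fun ψ _ => h1 ψ), Finset.sum_comm]
    have h2 : ∀ S : Finset G, ∑ ψ : AddChar G ℂ, ψ (S.sum id - b)
        = if S.sum id = b then (n : ℂ) else 0 := by
      intro S
      rw [AddChar.sum_apply_eq_ite, hn]
      congr 1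
      · simp [sub_eq_zero]
    rw [Finset.sum_congr rfl (fun S _ => h2 S), ← Finset.sum_filter, Finset.sum_const, ← hN,
      nsmul_eq_mul, mul_comm]
  have hsplit : (n : ℂ) * N - (n.choose k : ℕ) = ∑ ψ ∈ (Finset.univ : Finset (AddChar G ℂ)).erase 0,
      ψ (-b) * T ψ := by
    rw [← hmain, ← Finset.add_sum_erase _ _ (Finset.mem_univ (0 : AddChar G ℂ))]
    have hT0 : (0 : AddChar G ℂ) (-b) * T 0 = (n.choose k : ℕ) := by
      rw [hTdef]
      simp only [AddChar.zero_apply, one_mul]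
      rw [Finset.sum_congr rfl (fun S _ => Finset.prod_const_one), Finset.sum_const,
        Finset.card_powersetCard, Finset.card_univ, ← hn, nsmul_eq_mul, mul_one]
    rw [hT0]
    ring
  have habs : ‖(n : ℂ) * N - (n.choose k : ℕ)‖ ≤ (n : ℝ) * ((k : ℝ) * B) := by
    rw [hsplit]
    calc ‖∑ ψ ∈ (Finset.univ : Finset (AddChar G ℂ)).erase 0, ψ (-b) * T ψ‖
        ≤ ∑ ψ ∈ (Finset.univ : Finset (AddChar G ℂ)).erase 0, ‖ψ (-b) * T ψ‖ :=
          norm_sum_le _ _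
      _ ≤ ∑ ψ ∈ (Finset.univ : Finset (AddChar G ℂ)).erase 0, B := by
          apply Finset.sum_le_sum
          intro ψ hψ
          have hψ0 : ψ ≠ 0 := Finset.ne_of_mem_erase hψ
          rw [norm_mul]
          have h5 : ‖ψ (-b)‖ = 1 := by
            rw [AddChar.norm_apply]
          rw [h5, one_mul]
          exact my_key G n k hn hk4 hk ψ hψ0
      _ ≤ (n : ℝ) * ((k : ℝ) * B) := by
          rw [Finset.sum_const, nsmul_eq_mul]
          have hcard : ((Finset.univ : Finset (AddChar G ℂ)).erase 0).card ≤ n := by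
            calc ((Finset.univ : Finset (AddChar G ℂ)).erase 0).card
                ≤ (Finset.univ : Finset (AddChar G ℂ)).card := Finset.card_erase_le
              _ = n := by rw [Finset.card_univ, AddChar.card_eq, ← hn]
          have hBnn : 0 ≤ B := by rw [hB]; positivity
          have hk1 : (1 : ℝ) ≤ (k : ℝ) := by exact_mod_cast (by omega : 1 ≤ k)
          calc (((Finset.univ : Finset (AddChar G ℂ)).erase 0).card : ℝ) * B
              ≤ (n : ℝ) * B := by
                apply mul_le_mul_of_nonneg_right _ hBnn
                exact_mod_cast hcard
            _ = (n : ℝ) * (1 * B) := by ring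
            _ ≤ (n : ℝ) * ((k : ℝ) * B) := by
                apply mul_le_mul_of_nonneg_left
                  (mul_le_mul_of_nonneg_right hk1 hBnn) (by positivity)
  have hfin : |(n : ℝ) * ((N : ℝ) - (n.choose k : ℝ) / (n : ℝ))| ≤ (n : ℝ) * ((k : ℝ) * B) := by
    have hne : (n : ℝ) ≠ 0 := ne_of_gt (by exact_mod_cast hn0)
    have he : (n : ℝ) * ((N : ℝ) - (n.choose k : ℝ) / (n : ℝ))
        = (n : ℝ) * (N : ℝ) - (n.choose k : ℝ) := by
      field_simp
    rw [he, ← Real.norm_eq_abs, ← Complex.norm_real]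
    push_cast
    exact habs
  have hnR : (0 : ℝ) < (n : ℝ) := by exact_mod_cast hn0
  rw [abs_mul, abs_of_pos hnR] at hfin
  exact le_of_mul_le_mul_left hfin hnR
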